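/- Let Δ be a 2-local derivation on M_2(B) vanishing on the span of the matrix units and on diagonal matrices. If x = [[e + b, b],[λe, 0]] with b ∈ B, ‖b‖ < 1, λ ∈ ℂ, and e the unit of B, then Δ(x) = 0. -/

import Mathlib

open Matrix

def IsDerivation {A : Type*} [Ring A] [Algebra ℂ A] (D : A → A) : Prop :=
  (∀ x y, D (x + y) = D x + D y) ∧ (∀ (c : ℂ) (x), D (c • x) = c • D x) ∧
  (∀ x y, D (x * y) = D x * y + x * D y)

def Is2LocalDerivation {A : Type*} [Ring A] [Algebra ℂ A] (Δ : A → A) : Prop :=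
  ∀ x y, ∃ D, IsDerivation D ∧ Δ x = D x ∧ Δ y = D y

def HasInnerDerivationProperty (A : Type*) [Ring A] [Algebra ℂ A] : Prop :=
  ∀ D : A → A, IsDerivation D → ∃ a : A, ∀ x, D x = a * x - x * a

/-- `Δ` vanishes on the linear span of the matrix units. -/
def VanishesOnUnits {A : Type*} [Ring A] [Algebra ℂ A] {n : ℕ}
    (Δ : Matrix (Fin n) (Fin n) A → Matrix (Fin n) (Fin n) A) : Prop :=
  ∀ x ∈ Submodule.span ℂ (Set.range fun p : Fin n × Fin n =>
      Matrix.single p.1 p.2 (1 : A)), Δ x = 0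
/-- `Δ` vanishes on all diagonal matrices. -/
def VanishesOnDiag {A : Type*} [Ring A] [Algebra ℂ A] {n : ℕ}
    (Δ : Matrix (Fin n) (Fin n) A → Matrix (Fin n) (Fin n) A) : Prop :=
  ∀ x : Matrix (Fin n) (Fin n) A, (∀ i j : Fin n, i ≠ j → x i j = 0) → Δ x = 0

section MatrixInner

variable {B : Type*} [Ring B] [Algebra ℂ B]

private lemma inner_add {R : Type*} [Ring R] (p q z : R) :
    (p + q) * z - z * (p + q) = (p * z - z * p) + (q * z - z * q) := by
  noncomm_ring

/-- Since every derivation on `B` is inner, every derivation on `M₂(B)` is inner. -/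
private lemma matrix_inner (hidp : HasInnerDerivationProperty B) :
    HasInnerDerivationProperty (Matrix (Fin 2) (Fin 2) B) := by
  intro D hD
  obtain ⟨hadd, hsmul, hmul⟩ := hD
  have hD0 : D 0 = 0 := by simpa using hsmul 0 0
  set e : Fin 2 → Fin 2 → Matrix (Fin 2) (Fin 2) B :=
    fun i j => single i j 1 with he
  have hee : ∀ i j k l : Fin 2, e i j * e k l = if j = k then e i l else 0 := by
    intro i j k l
    rcases eq_or_ne j k with rfl | h
    · simp [he]
    · simp only [he, if_neg h]
      exact Matrix.single_mul_single_of_ne (h := h) ..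
  have hsum : e 0 0 + e 1 1 = 1 := by
    ext i j
    fin_cases i <;> fin_cases j <;>
      simp [he, Matrix.single, Matrix.one_apply]
  have q1 : e 0 0 * e 0 0 = e 0 0 := by simpa using hee 0 0 0 0
  have q2 : e 0 1 * e 0 0 = 0 := by simpa using hee 0 1 0 0
  have q3 : e 0 0 * e 0 1 = e 0 1 := by simpa using hee 0 0 0 1
  have q4 : e 0 1 * e 0 1 = 0 := by simpa using hee 0 1 0 1
  have q5 : e 0 0 * e 1 0 = 0 := by simpa using hee 0 0 1 0
  have q6 : e 0 1 * e 1 0 = e 0 0 := by simpa using hee 0 1 1 0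
  have q7 : e 0 0 * e 1 1 = 0 := by simpa using hee 0 0 1 1
  have q8 : e 0 1 * e 1 1 = e 0 1 := by simpa using hee 0 1 1 1
  have q9 : e 1 0 * e 0 0 = e 1 0 := by simpa using hee 1 0 0 0
  have q10 : e 1 1 * e 0 0 = 0 := by simpa using hee 1 1 0 0
  have q11 : e 1 0 * e 0 1 = e 1 1 := by simpa using hee 1 0 0 1
  have q13 : e 1 0 * e 1 0 = 0 := by simpa using hee 1 0 1 0
  have q14 : e 1 1 * e 1 0 = e 1 0 := by simpa using hee 1 1 1 0
  set d : Fin 2 → Fin 2 → Matrix (Fin 2) (Fin 2) B := fun i j => D (e i j) with hd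
  -- Leibniz-derived facts
  have LA : e 0 0 * d 0 0 = d 0 0 - d 0 0 * e 0 0 := by
    have h := hmul (e 0 0) (e 0 0); rw [q1] at h
    rw [eq_sub_iff_add_eq, add_comm]; exact h.symm
  have LE : e 0 0 * d 1 0 = -(d 0 0 * e 1 0) := by
    have h := hmul (e 0 0) (e 1 0); rw [q5, hD0] at h
    rw [eq_neg_iff_add_eq_zero, add_comm]; exact h.symm
  have LC : e 1 0 * d 0 0 = d 1 0 - d 1 0 * e 0 0 := by
    have h := hmul (e 1 0) (e 0 0); rw [q9] at h
    rw [eq_sub_iff_add_eq, add_comm]; exact h.symm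
  have LH : e 1 0 * d 1 0 = -(d 1 0 * e 1 0) := by
    have h := hmul (e 1 0) (e 1 0); rw [q13, hD0] at h
    rw [eq_neg_iff_add_eq_zero, add_comm]; exact h.symm
  have LG : e 0 1 * d 0 0 = -(d 0 1 * e 0 0) := by
    have h := hmul (e 0 1) (e 0 0); rw [q2, hD0] at h
    rw [eq_neg_iff_add_eq_zero, add_comm]; exact h.symm
  have LF : e 0 1 * d 1 0 = d 0 0 - d 0 1 * e 1 0 := by
    have h := hmul (e 0 1) (e 1 0); rw [q6] at h
    rw [eq_sub_iff_add_eq, add_comm]; exact h.symm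
  have LI : e 1 1 * d 0 0 = -(d 1 1 * e 0 0) := by
    have h := hmul (e 1 1) (e 0 0); rw [q10, hD0] at h
    rw [eq_neg_iff_add_eq_zero, add_comm]; exact h.symm
  have LJ : e 1 1 * d 1 0 = d 1 0 - d 1 1 * e 1 0 := by
    have h := hmul (e 1 1) (e 1 0); rw [q14] at h
    rw [eq_sub_iff_add_eq, add_comm]; exact h.symm
  set a0 : Matrix (Fin 2) (Fin 2) B := d 0 0 * e 0 0 + d 1 0 * e 0 1 with ha0
  -- the inner derivation by `a0` matches `D` on matrix units
  have case00 : D (e 0 0) = a0 * e 0 0 - e 0 0 * a0 := by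
    have h1 : a0 * e 0 0 = d 0 0 * e 0 0 := by
      rw [ha0, add_mul, mul_assoc, mul_assoc, q1, q2, mul_zero, add_zero]
    have h2 : e 0 0 * a0 = -(d 0 0 * e 1 1) := by
      calc e 0 0 * a0 = e 0 0 * d 0 0 * e 0 0 + e 0 0 * d 1 0 * e 0 1 := by
            rw [ha0, mul_add, ← mul_assoc, ← mul_assoc]
        _ = (d 0 0 - d 0 0 * e 0 0) * e 0 0 + (-(d 0 0 * e 1 0)) * e 0 1 := by
            rw [LA, LE]
        _ = -(d 0 0 * e 1 1) := by
            rw [sub_mul, mul_assoc, q1, neg_mul, mul_assoc, q11]; abel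
    rw [h1, h2, sub_neg_eq_add, ← mul_add, hsum, mul_one]
  have case10 : D (e 1 0) = a0 * e 1 0 - e 1 0 * a0 := by
    have h1 : a0 * e 1 0 = d 1 0 * e 0 0 := by
      rw [ha0, add_mul, mul_assoc, mul_assoc, q5, q6, mul_zero, zero_add]
    have h2 : e 1 0 * a0 = -(d 1 0 * e 1 1) := by
      calc e 1 0 * a0 = e 1 0 * d 0 0 * e 0 0 + e 1 0 * d 1 0 * e 0 1 := by
            rw [ha0, mul_add, ← mul_assoc, ← mul_assoc]
        _ = (d 1 0 - d 1 0 * e 0 0) * e 0 0 + (-(d 1 0 * e 1 0)) * e 0 1 := by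
            rw [LC, LH]
        _ = -(d 1 0 * e 1 1) := by
            rw [sub_mul, mul_assoc, q1, neg_mul, mul_assoc, q11]; abel
    rw [h1, h2, sub_neg_eq_add, ← mul_add, hsum, mul_one]
  have case01 : D (e 0 1) = a0 * e 0 1 - e 0 1 * a0 := by
    have h1 : a0 * e 0 1 = d 0 0 * e 0 1 := by
      rw [ha0, add_mul, mul_assoc, mul_assoc, q3, q4, mul_zero, add_zero]
    have h2 : e 0 1 * a0 = -(d 0 1 * e 0 0) + (d 0 0 * e 0 1 - d 0 1 * e 1 1) := by
      calc e 0 1 * a0 = e 0 1 * d 0 0 * e 0 0 + e 0 1 * d 1 0 * e 0 1 := by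
            rw [ha0, mul_add, ← mul_assoc, ← mul_assoc]
        _ = (-(d 0 1 * e 0 0)) * e 0 0 + (d 0 0 - d 0 1 * e 1 0) * e 0 1 := by
            rw [LG, LF]
        _ = -(d 0 1 * e 0 0) + (d 0 0 * e 0 1 - d 0 1 * e 1 1) := by
            rw [neg_mul, mul_assoc, q1, sub_mul, mul_assoc, q11]
    rw [h1, h2]
    have h3 : d 0 0 * e 0 1 - (-(d 0 1 * e 0 0) + (d 0 0 * e 0 1 - d 0 1 * e 1 1))
        = d 0 1 * (e 0 0 + e 1 1) := by noncomm_ring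
    rw [h3, hsum, mul_one]
  have case11 : D (e 1 1) = a0 * e 1 1 - e 1 1 * a0 := by
    have h1 : a0 * e 1 1 = d 1 0 * e 0 1 := by
      rw [ha0, add_mul, mul_assoc, mul_assoc, q7, q8, mul_zero, zero_add]
    have h2 : e 1 1 * a0 = -(d 1 1 * e 0 0) + (d 1 0 * e 0 1 - d 1 1 * e 1 1) := by
      calc e 1 1 * a0 = e 1 1 * d 0 0 * e 0 0 + e 1 1 * d 1 0 * e 0 1 := by
            rw [ha0, mul_add, ← mul_assoc, ← mul_assoc]
        _ = (-(d 1 1 * e 0 0)) * e 0 0 + (d 1 0 - d 1 1 * e 1 0) * e 0 1 := by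
            rw [LI, LJ]
        _ = -(d 1 1 * e 0 0) + (d 1 0 * e 0 1 - d 1 1 * e 1 1) := by
            rw [neg_mul, mul_assoc, q1, sub_mul, mul_assoc, q11]
    rw [h1, h2]
    have h3 : d 1 0 * e 0 1 - (-(d 1 1 * e 0 0) + (d 1 0 * e 0 1 - d 1 1 * e 1 1))
        = d 1 1 * (e 0 0 + e 1 1) := by noncomm_ring
    rw [h3, hsum, mul_one]
  -- the reduced derivation
  set D' : Matrix (Fin 2) (Fin 2) B → Matrix (Fin 2) (Fin 2) B :=
    fun z => D z - (a0 * z - z * a0) with hD'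
  have hD'add : ∀ z w, D' (z + w) = D' z + D' w := by
    intro z w; simp only [hD', hadd]; noncomm_ring
  have hD'smul : ∀ (c : ℂ) z, D' (c • z) = c • D' z := by
    intro c z
    simp only [hD', hsmul, smul_sub, Matrix.mul_smul, Matrix.smul_mul]
  have hD'mul : ∀ z w, D' (z * w) = D' z * w + z * D' w := by
    intro z w; simp only [hD', hmul]; noncomm_ring
  have hD'e : ∀ i j : Fin 2, D' (e i j) = 0 := by
    intro i j
    fin_cases i <;> fin_cases j
    exacts [sub_eq_zero_of_eq case00, sub_eq_zero_of_eq case01,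
      sub_eq_zero_of_eq case10, sub_eq_zero_of_eq case11]
  -- scalar matrices
  set S : B → Matrix (Fin 2) (Fin 2) B := fun u => Matrix.diagonal (fun _ => u) with hS
  have hSe : ∀ (u : B) (i j : Fin 2), S u * e i j = single i j u := by
    intro u i j
    ext k l
    simp [hS, he, Matrix.diagonal_mul, Matrix.single]
  have heS : ∀ (u : B) (i j : Fin 2), e i j * S u = single i j u := by
    intro u i j
    ext k l
    simp [hS, he, Matrix.mul_diagonal, Matrix.single]
  have hScomm : ∀ (u : B) (i j : Fin 2), S u * e i j = e i j * S u := by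
    intro u i j; rw [hSe, heS]
  have hSmul : ∀ u v : B, S u * S v = S (u * v) := by
    intro u v; simp [hS, Matrix.diagonal_mul_diagonal]
  -- D' (S u) is scalar
  have hDS : ∀ u : B, D' (S u) = S ((D' (S u)) 0 0) := by
    intro u
    set m := D' (S u) with hm
    have hcm : ∀ i j : Fin 2, m * e i j = e i j * m := by
      intro i j
      have h1 : D' (S u * e i j) = m * e i j := by
        rw [hD'mul, hD'e, mul_zero, add_zero]
      have h2 : D' (e i j * S u) = e i j * m := by
        rw [hD'mul, hD'e, zero_mul, zero_add]
      rw [← h1, ← h2, hScomm]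
    have h00 := hcm 0 0
    have h01 := hcm 0 1
    have e10_0 : m 1 0 = 0 := by
      have h := congrFun (congrFun h00 1) 0
      simpa [he] using h
    have e01_0 : m 0 1 = 0 := by
      have h := congrFun (congrFun h00 0) 1
      simpa [he] using h.symm
    have ediag : m 0 0 = m 1 1 := by
      have h := congrFun (congrFun h01 0) 1
      simpa [he] using h
    ext k l
    fin_cases k <;> fin_cases l <;>
      simp [hS, Matrix.diagonal, e10_0, e01_0, ← ediag]
  -- the induced derivation on B
  set δ : B → B := fun u => (D' (S u)) 0 0 with hδ
  have hSadd : ∀ u v : B, S (u + v) = S u + S v := by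
    intro u v; simp [hS, Matrix.diagonal_add]
  have hSsmul : ∀ (c : ℂ) (u : B), S (c • u) = c • S u := by
    intro c u
    ext i j
    by_cases hij : i = j <;> simp [hS, Matrix.diagonal_apply, hij]
  have hδder : IsDerivation δ := by
    refine ⟨fun u v => ?_, fun c u => ?_, fun u v => ?_⟩
    · simp [hδ, hSadd, hD'add]
    · simp [hδ, hSsmul, hD'smul]
    · have h : D' (S (u * v)) = S (δ u) * S v + S u * S (δ v) := by
        rw [← hSmul, hD'mul, ← hDS, ← hDS]
      have h' : D' (S (u * v)) = S (δ u * v + u * δ v) := by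
        rw [h, hSmul, hSmul, hSadd]
      have hh := congrFun (congrFun h' 0) 0
      simpa [hδ, hS, Matrix.diagonal] using hh
  obtain ⟨c, hc⟩ := hidp δ hδder
  -- D' is inner by S c
  have hD'inner : ∀ z, D' z = S c * z - z * S c := by
    intro z
    have hz : z = ∑ i : Fin 2, ∑ j : Fin 2, single i j (z i j) :=
      matrix_eq_sum_single z
    have hterm : ∀ (i j : Fin 2) (w : B),
        D' (single i j w) = single i j (δ w) := by
      intro i j w
      rw [← hSe, hD'mul, hD'e, mul_zero, add_zero]
      have : D' (S w) = S (δ w) := hDS w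
      rw [this]
      exact hSe (δ w) i j
    have hL : D' z = ∑ i : Fin 2, ∑ j : Fin 2, single i j (δ (z i j)) := by
      conv_lhs => rw [hz]
      rw [Fin.sum_univ_two, Fin.sum_univ_two, Fin.sum_univ_two,
        hD'add, hD'add, hD'add, hterm, hterm, hterm, hterm,
        Fin.sum_univ_two, Fin.sum_univ_two, Fin.sum_univ_two]
    rw [hL]
    ext k l
    have hRkl : (S c * z - z * S c) k l = δ (z k l) := by
      simp [hS, Matrix.sub_apply, Matrix.diagonal_mul, Matrix.mul_diagonal, hc]
    rw [hRkl]
    fin_cases k <;> fin_cases l <;>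
      simp [Fin.sum_univ_two, Matrix.single, Matrix.add_apply]
  refine ⟨a0 + S c, fun z => ?_⟩
  rw [inner_add]
  have h := hD'inner z
  simp only [hD'] at h
  rw [sub_eq_iff_eq_add] at h
  exact h.trans (add_comm _ _)

end MatrixInner

theorem stmt14 {B : Type*} [NormedRing B] [NormedAlgebra ℂ B] [CompleteSpace B]
    (hidp : HasInnerDerivationProperty B)
    (Δ : Matrix (Fin 2) (Fin 2) B → Matrix (Fin 2) (Fin 2) B)
    (hΔ : Is2LocalDerivation Δ) (hvan : VanishesOnUnits Δ)
    (hdiag : VanishesOnDiag Δ)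
    (b : B) (hb : ‖b‖ < 1) (lam : ℂ)
    (x : Matrix (Fin 2) (Fin 2) B)
    (hx : x = !![1 + b, b; lam • (1 : B), 0]) :
    Δ x = 0 := by
  subst hx
  have hu : IsUnit (1 + b) := by
    have h := isUnit_one_sub_of_norm_lt_one (x := -b) (by simpa using hb)
    simpa [sub_neg_eq_add] using h
  set X : Matrix (Fin 2) (Fin 2) B := !![1 + b, b; lam • (1 : B), 0] with hX
  -- Step 1 : pair with the diagonal matrix diag(1+b, 0)
  have h00 : (Δ X) 0 0 = 0 ∧ (Δ X) 1 1 = 0 := by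
    obtain ⟨D, hD, hDx, hDy⟩ := hΔ X (!![1 + b, 0; 0, 0])
    obtain ⟨a, ha⟩ := matrix_inner hidp D hD
    have hy0 : Δ (!![1 + b, 0; 0, 0] : Matrix (Fin 2) (Fin 2) B) = 0 := by
      apply hdiag
      intro i j hij
      fin_cases i <;> fin_cases j <;> first | exact absurd rfl hij | simp
    have hcomm : a * !![1 + b, 0; 0, 0] = !![1 + b, 0; 0, 0] * a :=
      sub_eq_zero.mp (by rw [← ha, ← hDy, hy0])
    have ha01 : a 0 1 = 0 := by
      have h := congrFun (congrFun hcomm 0) 1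
      simp [Matrix.mul_apply, Fin.sum_univ_two] at h
      exact hu.mul_left_cancel (by rw [mul_zero]; exact h.symm)
    have ha10 : a 1 0 = 0 := by
      have h := congrFun (congrFun hcomm 1) 0
      simp [Matrix.mul_apply, Fin.sum_univ_two] at h
      exact hu.mul_right_cancel (by rw [zero_mul]; exact h)
    have hp : a 0 0 * (1 + b) = (1 + b) * a 0 0 := by
      have h := congrFun (congrFun hcomm 0) 0
      simpa [Matrix.mul_apply, Fin.sum_univ_two] using h
    have hΔX : Δ X = a * X - X * a := by rw [hDx, ha]
    constructor
    · have h := congrFun (congrFun hΔX 0) 0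
      rw [h]
      simp only [hX, Matrix.sub_apply, Matrix.mul_apply, Fin.sum_univ_two,
        Matrix.cons_val', Matrix.cons_val_zero, Matrix.cons_val_one, Matrix.head_cons,
        Matrix.empty_val', Matrix.cons_val_fin_one, Matrix.head_fin_const, Matrix.of_apply]
      rw [ha01, ha10, hp]
      simp
    · have h := congrFun (congrFun hΔX 1) 1
      rw [h]
      simp only [hX, Matrix.sub_apply, Matrix.mul_apply, Fin.sum_univ_two,
        Matrix.cons_val', Matrix.cons_val_zero, Matrix.cons_val_one, Matrix.head_cons,
        Matrix.empty_val', Matrix.cons_val_fin_one, Matrix.head_fin_const, Matrix.of_apply]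
      rw [ha01, ha10]
      simp
  -- Step 2 : pair with the matrix unit e₀₁
  have h10 : (Δ X) 1 0 = 0 := by
    obtain ⟨D, hD, hDx, hDy⟩ := hΔ X (single 0 1 (1 : B))
    obtain ⟨a, ha⟩ := matrix_inner hidp D hD
    have hy0 : Δ (single 0 1 (1 : B)) = 0 :=
      hvan _ (Submodule.subset_span ⟨((0 : Fin 2), (1 : Fin 2)), rfl⟩)
    have hyconc : (single 0 1 (1 : B)) = !![0, 1; 0, 0] := by
      ext i j
      fin_cases i <;> fin_cases j <;> simp [Matrix.single]
    have hcomm : a * !![0, 1; 0, 0] = !![0, 1; 0, 0] * a := by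
      rw [← hyconc]
      exact sub_eq_zero.mp (by rw [← ha, ← hDy, hy0])
    have hd : a 0 0 = a 1 1 := by
      have h := congrFun (congrFun hcomm 0) 1
      simpa [Matrix.mul_apply, Fin.sum_univ_two] using h
    have ha10 : a 1 0 = 0 := by
      have h := congrFun (congrFun hcomm 1) 1
      simpa [Matrix.mul_apply, Fin.sum_univ_two] using h
    have hΔX : Δ X = a * X - X * a := by rw [hDx, ha]
    have h := congrFun (congrFun hΔX 1) 0
    rw [h]
    simp only [hX, Matrix.sub_apply, Matrix.mul_apply, Fin.sum_univ_two,
        Matrix.cons_val', Matrix.cons_val_zero, Matrix.cons_val_one, Matrix.head_cons,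
        Matrix.empty_val', Matrix.cons_val_fin_one, Matrix.head_fin_const, Matrix.of_apply]
    rw [ha10, hd]
    simp [smul_mul_assoc, mul_smul_comm]
  -- Step 3 : pair with the matrix unit e₁₀
  obtain ⟨D, hD, hDx, hDy⟩ := hΔ X (single 1 0 (1 : B))
  obtain ⟨a, ha⟩ := matrix_inner hidp D hD
  have hy0 : Δ (single 1 0 (1 : B)) = 0 :=
    hvan _ (Submodule.subset_span ⟨((1 : Fin 2), (0 : Fin 2)), rfl⟩)
  have hyconc : (single 1 0 (1 : B)) = !![0, 0; 1, 0] := by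
    ext i j
    fin_cases i <;> fin_cases j <;> simp [Matrix.single]
  have hcomm : a * !![0, 0; 1, 0] = !![0, 0; 1, 0] * a := by
    rw [← hyconc]
    exact sub_eq_zero.mp (by rw [← ha, ← hDy, hy0])
  have ha01 : a 0 1 = 0 := by
    have h := congrFun (congrFun hcomm 0) 0
    simpa [Matrix.mul_apply, Fin.sum_univ_two] using h
  have hdiagr : a 1 1 = a 0 0 := by
    have h := congrFun (congrFun hcomm 1) 0
    simpa [Matrix.mul_apply, Fin.sum_univ_two] using h
  have hΔX : Δ X = a * X - X * a := by rw [hDx, ha]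
  -- from entry (1,0) = 0 deduce a 1 0 = 0
  have ha10 : a 1 0 = 0 := by
    have h := congrFun (congrFun hΔX 1) 0
    rw [h10] at h
    simp only [hX, Matrix.sub_apply, Matrix.mul_apply, Fin.sum_univ_two,
      Matrix.cons_val', Matrix.cons_val_zero, Matrix.cons_val_one, Matrix.head_cons,
      Matrix.empty_val', Matrix.cons_val_fin_one, Matrix.head_fin_const, Matrix.of_apply] at h
    rw [hdiagr] at h
    simp [smul_mul_assoc, mul_smul_comm] at h
    exact hu.mul_right_cancel (by rw [zero_mul]; exact h.symm)
  -- from entry (0,0) = 0 deduce a 0 0 commutes with b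
  have hcb : a 0 0 * (1 + b) = (1 + b) * a 0 0 := by
    have h := congrFun (congrFun hΔX 0) 0
    rw [h00.1] at h
    simp only [hX, Matrix.sub_apply, Matrix.mul_apply, Fin.sum_univ_two,
      Matrix.cons_val', Matrix.cons_val_zero, Matrix.cons_val_one, Matrix.head_cons,
      Matrix.empty_val', Matrix.cons_val_fin_one, Matrix.head_fin_const, Matrix.of_apply] at h
    rw [ha01, ha10] at h
    simp at h
    exact sub_eq_zero.mp h.symm
  have hcb' : a 0 0 * b = b * a 0 0 := by
    have h := hcb
    rw [mul_add, add_mul, mul_one, one_mul] at h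
    exact add_left_cancel h
  have h01 : (Δ X) 0 1 = 0 := by
    have h := congrFun (congrFun hΔX 0) 1
    rw [h]
    simp only [hX, Matrix.sub_apply, Matrix.mul_apply, Fin.sum_univ_two,
        Matrix.cons_val', Matrix.cons_val_zero, Matrix.cons_val_one, Matrix.head_cons,
        Matrix.empty_val', Matrix.cons_val_fin_one, Matrix.head_fin_const, Matrix.of_apply]
    rw [ha01, hdiagr, hcb']
    simp
  have h11 : (Δ X) 1 1 = 0 := h00.2
  have h00' : (Δ X) 0 0 = 0 := h00.1
  ext i j
  fin_cases i <;> fin_cases j <;> simp only [Matrix.zero_apply] <;>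
    [exact h00'; exact h01; exact h10; exact h11]
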